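/- For m > 3 odd and gcd(i,m)=1, the function F'(x) = x^{2^i+1} + (x^{2^i}+x)·tr(x^{2^i+1}+x) on F_{2^m} is an almost bent function (its Walsh values λ_{F'}(a,b) for b≠0 all lie in {0, ±2^{(m+1)/2}}), and F' is EA-inequivalent to every power function. -/

import Mathlib

open scoped BigOperators

/-- The absolute trace of `𝔽_{2^m}` over `𝔽₂`. -/
noncomputable def tr (m : ℕ) (x : GaloisField 2 m) : ZMod 2 :=
  Algebra.trace (ZMod 2) (GaloisField 2 m) x

/-- The function `F'(x) = x^{2^i+1} + (x^{2^i} + x)·tr(x^{2^i+1} + x)`. -/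
noncomputable def Fab (m i : ℕ) (x : GaloisField 2 m) : GaloisField 2 m :=
  x ^ (2 ^ i + 1) + (x ^ (2 ^ i) + x) *
    algebraMap (ZMod 2) (GaloisField 2 m) (tr m (x ^ (2 ^ i + 1) + x))

/-- The Walsh value `λ_F(a,b) = Σ_x (-1)^{tr(b·F(x)) + tr(a·x)}`. -/
noncomputable def walsh (m : ℕ) (F : GaloisField 2 m → GaloisField 2 m)
    (a b : GaloisField 2 m) : ℤ :=
  ∑ᶠ x : GaloisField 2 m, (-1 : ℤ) ^ (tr m (b * F x) + tr m (a * x)).val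

namespace AB16


noncomputable instance (m : ℕ) : Fintype (GaloisField 2 m) := Fintype.ofFinite _

variable {m : ℕ}

lemma two_eq_zero : (2 : GaloisField 2 m) = 0 := by
  have := CharP.cast_eq_zero (GaloisField 2 m) 2
  simpa using this

lemma zmod2_cases (t : ZMod 2) : t = 0 ∨ t = 1 := by revert t; decide

lemma card_F (hm : m ≠ 0) : Fintype.card (GaloisField 2 m) = 2 ^ m := by
  rw [← Nat.card_eq_fintype_card, GaloisField.card 2 m hm]

lemma tr_add (x y : GaloisField 2 m) : tr m (x + y) = tr m x + tr m y :=
  map_add (Algebra.trace (ZMod 2) (GaloisField 2 m)) x y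

lemma tr_zero : tr m 0 = 0 := map_zero (Algebra.trace (ZMod 2) (GaloisField 2 m))

lemma tr_algmul (c : ZMod 2) (z : GaloisField 2 m) :
    tr m (algebraMap (ZMod 2) (GaloisField 2 m) c * z) = c * tr m z := by
  unfold tr
  rw [← Algebra.smul_def, map_smul, smul_eq_mul]

/-- Frobenius as an algebra equivalence over `ZMod 2`. -/
noncomputable def frobAE (m : ℕ) : GaloisField 2 m ≃ₐ[ZMod 2] GaloisField 2 m :=
  AlgEquiv.ofRingEquiv (f := frobeniusEquiv (GaloisField 2 m) 2)
    (fun c => by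
      have hc : c ^ 2 = c := by revert c; decide
      simp [frobeniusEquiv_apply, frobenius_def, ← map_pow, hc])

lemma tr_sq (z : GaloisField 2 m) : tr m (z ^ 2) = tr m z := by
  have h := Algebra.trace_eq_of_algEquiv (frobAE m) z
  have hz : frobAE m z = z ^ 2 := by
    simp [frobAE, AlgEquiv.ofRingEquiv, frobeniusEquiv_apply, frobenius_def]
  rw [← hz]; exact h

lemma tr_pow2pow (k : ℕ) (z : GaloisField 2 m) : tr m (z ^ (2 ^ k)) = tr m z := by
  induction k with
  | zero => simp
  | succ n ih =>
    have : z ^ (2 ^ (n + 1)) = (z ^ (2 ^ n)) ^ 2 := by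
      rw [← pow_mul, pow_succ]
    rw [this, tr_sq, ih]


lemma pow_card (hm : m ≠ 0) (z : GaloisField 2 m) : z ^ (2 ^ m) = z := by
  have := FiniteField.pow_card z
  rwa [card_F hm] at this

lemma pow_pow_inj (k : ℕ) : Function.Injective (fun z : GaloisField 2 m => z ^ (2 ^ k)) := by
  intro x y h
  simp only at h
  have h2 : (x - y) ^ (2 ^ k) = 0 := by
    rw [sub_pow_char_pow]; simpa [sub_eq_zero] using h
  have := pow_eq_zero_iff (n := 2 ^ k) (by positivity) |>.mp h2
  exact sub_eq_zero.mp this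

lemma pow_mul_add (a q r : ℕ) (ha : ∀ z : GaloisField 2 m, z ^ (2 ^ a) = z)
    (z : GaloisField 2 m) : z ^ (2 ^ (a * q + r)) = z ^ (2 ^ r) := by
  induction q with
  | zero => simp
  | succ n ih =>
    have : a * (n + 1) + r = (a * n + r) + a := by ring
    rw [this, pow_add, pow_mul, ha, ih]

lemma pow2_mod (hm : m ≠ 0) (k : ℕ) (z : GaloisField 2 m) :
    z ^ (2 ^ k) = z ^ (2 ^ (k % m)) := by
  conv_lhs => rw [show k = m * (k / m) + k % m from (Nat.div_add_mod k m).symm ▸ rfl]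
  exact pow_mul_add m (k / m) (k % m) (pow_card hm) z

lemma fix_gcd (a b : ℕ) (z : GaloisField 2 m) (ha : z ^ (2 ^ a) = z) (hb : z ^ (2 ^ b) = z) :
    z ^ (2 ^ Nat.gcd a b) = z := by
  induction a using Nat.strong_induction_on generalizing b z with
  | _ a ih =>
    rcases Nat.eq_zero_or_pos a with h0 | hpos
    · subst h0; simpa using hb
    · rw [Nat.gcd_rec a b]
      have hfix : ∀ w : GaloisField 2 m, w ^ (2 ^ a) = w → w ^ (2 ^ (a * (b / a) + b % a)) = w ^ (2 ^ (b % a)) := by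
        intro w hw
        induction (b / a) with
        | zero => simp
        | succ n ih2 =>
          have h3 : a * (n + 1) + b % a = (a * n + b % a) + a := by ring
          rw [h3, pow_add, pow_mul, pow_right_comm, hw, ih2]
      have : z ^ (2 ^ (b % a)) = z := by
        have h1 := hfix z ha
        rw [Nat.div_add_mod b a] at h1
        rw [← h1, hb]
      exact ih (b % a) (Nat.mod_lt _ hpos) a z this ha

lemma fix_eta {k : ℕ} (hm : m ≠ 0) (hk : Nat.gcd k m = 1) (z : GaloisField 2 m)
    (hz : z ^ (2 ^ k) = z) : z = 0 ∨ z = 1 := by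
  have h := fix_gcd k m z hz (pow_card hm z)
  rw [hk] at h
  have hz2 : z ^ 2 = z := by simpa using h
  have : z * (z - 1) = 0 := by linear_combination hz2
  rcases mul_eq_zero.mp this with h' | h'
  · exact Or.inl h'
  · exact Or.inr (sub_eq_zero.mp h')



lemma zmod2_ne_zero {t : ZMod 2} (h : t ≠ 0) : t = 1 := by revert t; decide

lemma tr_nondeg {c : GaloisField 2 m} (hc : c ≠ 0) : ∃ x, tr m (c * x) = 1 := by
  have hnd := traceForm_nondegenerate (ZMod 2) (GaloisField 2 m)
  by_contra hno
  push_neg at hno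
  apply hc
  apply hnd.1 c
  intro y
  have := hno y
  have h2 : tr m (c * y) = 0 := by
    have hcase : ∀ t : ZMod 2, t ≠ 1 → t = 0 := by decide
    exact hcase _ this
  simpa [Algebra.traceForm_apply, tr] using h2

/-- every additive map to ZMod 2 is of the form `tr (s * ·)`. -/
lemma exists_adjoint (φ : GaloisField 2 m → ZMod 2)
    (hφ : ∀ x y, φ (x + y) = φ x + φ y) : ∃ s, ∀ x, φ x = tr m (s * x) := by
  have hφ0 : φ 0 = 0 := by
    have := hφ 0 0; simpa using this.symm
  let φL : GaloisField 2 m →ₗ[ZMod 2] ZMod 2 :=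
    { toFun := φ
      map_add' := hφ
      map_smul' := by
        intro c x
        rcases (show ∀ t : ZMod 2, t = 0 ∨ t = 1 by decide) c with rfl | rfl
        · simpa using hφ0
        · simp }
  let B := Algebra.traceForm (ZMod 2) (GaloisField 2 m)
  have hnd : B.Nondegenerate := traceForm_nondegenerate _ _
  let e := LinearMap.BilinForm.toDual B hnd
  refine ⟨e.symm φL, fun x => ?_⟩
  have h1 : B (e.symm φL) x = φL x := by
    have := LinearMap.BilinForm.apply_toDual_symm_apply (B := B) (hB := hnd) φL x
    exact this
  have h2 : B (e.symm φL) x = tr m (e.symm φL * x) := by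
    simp [B, Algebra.traceForm_apply, tr]
  rw [← h2, h1]; rfl



def sgn (t : ZMod 2) : ℤ := (-1) ^ t.val

lemma sgn_add (s t : ZMod 2) : sgn (s + t) = sgn s * sgn t := by revert s t; decide
lemma sgn_zero : sgn 0 = 1 := rfl
lemma sgn_cases (t : ZMod 2) : sgn t = 1 ∨ sgn t = -1 := by revert t; decide
lemma sgn_add_one (t : ZMod 2) : sgn (t + 1) = - sgn t := by revert t; decide

lemma sum_sgn_eq_zero (φ : GaloisField 2 m → ZMod 2)
    (hφ : ∀ x y, φ (x + y) = φ x + φ y) (x₀ : GaloisField 2 m) (h1 : φ x₀ = 1) :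
    ∑ x, sgn (φ x) = 0 := by
  have key : ∑ x, sgn (φ (x + x₀)) = ∑ x, sgn (φ x) :=
    Fintype.sum_equiv (Equiv.addRight x₀) _ _ (fun x => rfl)
  have key2 : ∑ x, sgn (φ (x + x₀)) = - ∑ x, sgn (φ x) := by
    rw [← Finset.sum_neg_distrib]
    apply Finset.sum_congr rfl
    intro x _
    rw [hφ, h1, sgn_add_one]
  have := key.symm.trans key2
  linarith

lemma sum_sgn_linear {c : GaloisField 2 m} (hc : c ≠ 0) :
    ∑ x, sgn (tr m (c * x)) = 0 := by
  obtain ⟨x₀, h1⟩ := tr_nondeg hc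
  exact sum_sgn_eq_zero _ (fun x y => by rw [mul_add, tr_add]) x₀ h1

lemma gold (hm : m ≠ 0) (hodd : Odd m) {j : ℕ} (hj : j ≠ 0)
    (hj2 : Nat.gcd (2 * j) m = 1) (a b : GaloisField 2 m) (hb : b ≠ 0) :
    (∑ x, sgn (tr m (b * (x ^ (2 ^ j) * x) + a * x))) = 0 ∨
    (∑ x, sgn (tr m (b * (x ^ (2 ^ j) * x) + a * x))) = 2 ^ ((m + 1) / 2) ∨
    (∑ x, sgn (tr m (b * (x ^ (2 ^ j) * x) + a * x))) = -(2 ^ ((m + 1) / 2)) := by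
  classical
  have h2 : (2 : GaloisField 2 m) = 0 := two_eq_zero
  have hfr : ∀ y z : GaloisField 2 m, (y + z) ^ (2 ^ j) = y ^ (2 ^ j) + z ^ (2 ^ j) :=
    fun y z => add_pow_char_pow y z 2 j
  set f : GaloisField 2 m → ZMod 2 := fun x => tr m (b * (x ^ (2 ^ j) * x) + a * x) with hf
  set S : ℤ := ∑ x, sgn (f x) with hS
  set cu : GaloisField 2 m → GaloisField 2 m :=
    fun u => b * u + b ^ (2 ^ j) * u ^ (2 ^ (2 * j)) with hcu
  have hexp : (2:ℕ) ^ j * 2 ^ j = 2 ^ (2 * j) := by rw [← pow_add]; congr 1; omega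
  -- pointwise key identity
  have key : ∀ x u : GaloisField 2 m,
      f (x + u) + f x = tr m (cu u * x ^ (2 ^ j)) + f u := by
    intro x u
    have e0 : f (x + u) + f x
        = tr m ((b * ((x+u) ^ (2^j) * (x+u)) + a * (x+u)) + (b * (x ^ (2^j) * x) + a * x)) := by
      rw [tr_add]
    have hPQ : (b * ((x+u) ^ (2^j) * (x+u)) + a * (x+u)) + (b * (x ^ (2^j) * x) + a * x)
        = (b * u * x ^ (2^j) + b * u ^ (2^j) * x) + (b * (u ^ (2^j) * u) + a * u) := by
      rw [hfr x u]
      linear_combination (b * (x ^ (2^j) * x) + a * x) * h2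
    rw [e0, hPQ, tr_add]
    congr 1
    have t2 : tr m (b * u ^ (2^j) * x) = tr m ((b ^ (2^j) * u ^ (2 ^ (2*j))) * x ^ (2^j)) := by
      rw [← tr_pow2pow j (b * u ^ (2^j) * x)]
      congr 1
      rw [mul_pow, mul_pow, ← pow_mul, hexp]
    rw [tr_add, t2, ← tr_add]
    congr 1
    rw [hcu]
    ring
  -- S^2 expansion
  have hS2 : S * S = ∑ u, sgn (f u) * (if cu u = 0 then ((2:ℤ) ^ m) else 0) := by
    have e1 : S * S = ∑ x, ∑ y, sgn (f x) * sgn (f y) := by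
      rw [hS, Finset.sum_mul_sum]
    have e2 : ∀ x : GaloisField 2 m,
        (∑ y, sgn (f x) * sgn (f y)) = ∑ u, sgn (f (x + u) + f x) := by
      intro x
      refine Fintype.sum_equiv (Equiv.subRight x) _ _ (fun y => ?_)
      rw [Equiv.subRight_apply, show x + (y - x) = y by ring, ← sgn_add, add_comm (f y)]
    have e3 : S * S = ∑ u, ∑ x, sgn (f (x + u) + f x) := by
      rw [e1, Finset.sum_congr rfl (fun x _ => e2 x)]
      exact Finset.sum_comm
    rw [e3]
    apply Finset.sum_congr rfl
    intro u _
    have e4 : ∀ x : GaloisField 2 m,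
        sgn (f (x+u) + f x) = sgn (tr m (cu u * x ^ (2^j))) * sgn (f u) := by
      intro x
      rw [key x u, sgn_add]
    rw [Finset.sum_congr rfl (fun x _ => e4 x), ← Finset.sum_mul, mul_comm]
    congr 1
    have e5 : (∑ x : GaloisField 2 m, sgn (tr m (cu u * x ^ (2^j))))
        = ∑ y : GaloisField 2 m, sgn (tr m (cu u * y)) := by
      have hbij : Function.Bijective (fun z : GaloisField 2 m => z ^ (2 ^ j)) :=
        Finite.injective_iff_bijective.mp (pow_pow_inj j)
      exact Fintype.sum_equiv (Equiv.ofBijective _ hbij) _ _ (fun z => rfl)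
    rw [e5]
    by_cases hc : cu u = 0
    · rw [if_pos hc]
      have hone : ∀ y : GaloisField 2 m, sgn (tr m (cu u * y)) = 1 := by
        intro y; rw [hc, zero_mul, tr_zero, sgn_zero]
      rw [Finset.sum_congr rfl (fun y _ => hone y)]
      simp [card_F hm]
    · rw [if_neg hc, sum_sgn_linear hc]
  -- the kernel of cu is {0, u₀}
  have hKnum : 2 ^ (2 * j) - 1 + 1 = 2 ^ (2 * j) := Nat.sub_add_cancel Nat.one_le_two_pow
  have hKpos : 2 ^ (2 * j) - 1 ≠ 0 := by
    have : (2:ℕ) ^ 1 ≤ 2 ^ (2 * j) := Nat.pow_le_pow_right (by norm_num) (by omega)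
    omega
  have heta_inj : Function.Injective (fun w : GaloisField 2 m => w ^ (2 ^ (2*j) - 1)) := by
    intro u v huv
    simp only at huv
    by_cases hu : u = 0
    · subst hu
      rw [zero_pow hKpos] at huv
      exact ((pow_eq_zero_iff hKpos).mp huv.symm).symm
    by_cases hv : v = 0
    · subst hv
      rw [zero_pow hKpos] at huv
      exact absurd ((pow_eq_zero_iff hKpos).mp huv) hu
    have hw : (u * v⁻¹) ^ (2 ^ (2*j)) = u * v⁻¹ := by
      have h1 : (u * v⁻¹) ^ (2 ^ (2*j) - 1) = 1 := by
        rw [mul_pow, huv, inv_pow, mul_inv_cancel₀ (pow_ne_zero _ hv)]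
      calc (u * v⁻¹) ^ (2 ^ (2*j))
          = (u * v⁻¹) ^ (2 ^ (2*j) - 1) * (u * v⁻¹) := by rw [← pow_succ, hKnum]
        _ = u * v⁻¹ := by rw [h1, one_mul]
    rcases fix_eta hm hj2 _ hw with h0 | h1
    · exact absurd h0 (by
        intro hh
        rcases mul_eq_zero.mp hh with h | h
        · exact hu h
        · exact hv (inv_eq_zero.mp h))
    · field_simp at h1
      exact h1
  have hbj : b ^ (2 ^ j) ≠ 0 := pow_ne_zero _ hb
  obtain ⟨u₀, hu₀⟩ := (Finite.injective_iff_surjective.mp heta_inj) (b * (b ^ (2 ^ j))⁻¹)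
  simp only at hu₀
  have hu₀ne : u₀ ≠ 0 := by
    intro hh
    rw [hh, zero_pow hKpos] at hu₀
    have hne : b * (b ^ (2 ^ j))⁻¹ ≠ 0 := by
      apply mul_ne_zero hb
      exact inv_ne_zero hbj
    exact hne hu₀.symm
  have hpow₀ : b ^ (2^j) * u₀ ^ (2 ^ (2*j)) = b * u₀ := by
    calc b ^ (2^j) * u₀ ^ (2 ^ (2*j))
        = b ^ (2^j) * (u₀ ^ (2 ^ (2*j) - 1) * u₀) := by rw [← pow_succ, hKnum]
      _ = b ^ (2^j) * (b * (b ^ (2 ^ j))⁻¹ * u₀) := by rw [hu₀]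
      _ = b * u₀ := by field_simp <;> ring
  have hcu₀ : cu u₀ = 0 := by
    rw [hcu]
    simp only
    rw [hpow₀]
    linear_combination (b * u₀) * h2
  have huniq : ∀ u : GaloisField 2 m, cu u = 0 → u ≠ 0 → u = u₀ := by
    intro u hcuu hune
    have h1 : b ^ (2^j) * u ^ (2 ^ (2*j)) = b * u := by
      have hz : b * u + b ^ (2^j) * u ^ (2 ^ (2*j)) = 0 := hcuu
      linear_combination hz - (b * u) * h2
    apply heta_inj
    simp only
    rw [hu₀]
    have hmul : b ^ (2^j) * (u ^ (2 ^ (2*j) - 1) * u) = b * u := by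
      rw [← pow_succ, hKnum]; exact h1
    field_simp
    calc u ^ (2 ^ (2*j) - 1) * b ^ (2 ^ j)
        = b ^ (2^j) * (u ^ (2 ^ (2*j) - 1) * u) * u⁻¹ := by field_simp <;> ring
      _ = b * u * u⁻¹ := by rw [hmul]
      _ = b := by field_simp
  have hfilter : Finset.univ.filter (fun u : GaloisField 2 m => cu u = 0) = {0, u₀} := by
    ext u
    simp only [Finset.mem_filter, Finset.mem_univ, true_and, Finset.mem_insert,
      Finset.mem_singleton]
    constructor
    · intro hcuu
      by_cases hu : u = 0
      · exact Or.inl hu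
      · exact Or.inr (huniq u hcuu hu)
    · rintro (rfl | rfl)
      · rw [hcu]; simp
      · exact hcu₀
  have hS2' : S * S = 2 ^ m + sgn (f u₀) * 2 ^ m := by
    rw [hS2]
    simp only [mul_ite, mul_zero]
    rw [← Finset.sum_filter, hfilter,
      Finset.sum_pair (fun hh => hu₀ne hh.symm)]
    have hf0 : f 0 = 0 := by rw [hf]; simp [tr_zero]
    rw [hf0, sgn_zero, one_mul]
  rcases sgn_cases (f u₀) with hsg | hsg
  · right
    have hsq : S * S = 2 ^ (m + 1) := by rw [hS2', hsg]; ring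
    have hsq2 : S * S = (2 ^ ((m+1)/2)) * ((2:ℤ) ^ ((m+1)/2)) := by
      rw [hsq, ← pow_add]
      congr 1
      obtain ⟨t, ht⟩ := hodd
      omega
    exact mul_self_eq_mul_self_iff.mp hsq2
  · left
    have hz : S * S = 0 := by rw [hS2', hsg]; ring
    exact mul_self_eq_zero.mp hz


-- axioms standing for already-proven lemmas
section withj
variable (m)
variable (j : ℕ)

/-- quadratic part -/
noncomputable def qf (x : GaloisField 2 m) : ZMod 2 := tr m (x ^ (2 ^ j) * x + x)
/-- the CCZ change of variables -/
noncomputable def sig (x : GaloisField 2 m) : GaloisField 2 m :=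
  x + algebraMap (ZMod 2) (GaloisField 2 m) (qf m j x)
end withj

lemma Fab_j {i : ℕ} (hm : m ≠ 0) (x : GaloisField 2 m) :
    Fab m i x = x ^ (2 ^ (i % m)) * x + (x ^ (2 ^ (i % m)) + x) *
      algebraMap (ZMod 2) (GaloisField 2 m) (qf m (i % m) x) := by
  rw [Fab, qf, pow_succ, pow2_mod hm i x]

section core
variable {i j : ℕ} (hm : m ≠ 0) (hj : j ≠ 0)

lemma qf_sig (x : GaloisField 2 m) : qf m j (sig m j x) = qf m j x := by
  have h2 : (2 : GaloisField 2 m) = 0 := two_eq_zero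
  have hfr : ∀ y z : GaloisField 2 m, (y + z) ^ (2 ^ j) = y ^ (2 ^ j) + z ^ (2 ^ j) :=
    fun y z => add_pow_char_pow y z 2 j
  rcases zmod2_cases (qf m j x) with h | h
  · rw [sig, h]; simpa using h
  · rw [sig, h, map_one]
    have harg : (x+1) ^ (2 ^ j) * (x+1) + (x+1)
        = (x ^ (2 ^ j) * x + x) + (x ^ (2 ^ j) + x) := by
      rw [hfr x 1, one_pow]
      linear_combination h2
    rw [qf, harg, tr_add]
    have hz : tr m (x ^ (2 ^ j) + x) = 0 := by
      rw [tr_add, tr_pow2pow]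
      exact CharTwo.add_self_eq_zero _
    rw [hz, add_zero, ← qf, h]

lemma sig_invol (x : GaloisField 2 m) : sig m j (sig m j x) = x := by
  have h2 : (2 : GaloisField 2 m) = 0 := two_eq_zero
  show sig m j x + algebraMap (ZMod 2) (GaloisField 2 m) (qf m j (sig m j x)) = x
  rw [qf_sig]
  show (x + algebraMap (ZMod 2) (GaloisField 2 m) (qf m j x)) +
    algebraMap (ZMod 2) (GaloisField 2 m) (qf m j x) = x
  rcases zmod2_cases (qf m j x) with h | h
  · rw [h]; simp
  · rw [h, map_one]
    linear_combination h2

lemma Fab_sig {i : ℕ} (hm : m ≠ 0) (hij : i % m = j) (x : GaloisField 2 m) :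
    Fab m i (sig m j x) = x ^ (2 ^ j) * x +
      algebraMap (ZMod 2) (GaloisField 2 m) (qf m j x) := by
  have h2 : (2 : GaloisField 2 m) = 0 := two_eq_zero
  have hfr : ∀ y z : GaloisField 2 m, (y + z) ^ (2 ^ j) = y ^ (2 ^ j) + z ^ (2 ^ j) :=
    fun y z => add_pow_char_pow y z 2 j
  rw [Fab_j hm, hij]
  rw [show qf m j (sig m j x) = qf m j x from qf_sig x]
  rcases zmod2_cases (qf m j x) with h | h
  · rw [sig, h]; simp [h]
  · rw [sig, h, map_one]
    rw [hfr x 1, one_pow]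
    linear_combination (x ^ (2 ^ j) + x + 1) * h2

end core

lemma walsh_eq (f : GaloisField 2 m → GaloisField 2 m) (a b : GaloisField 2 m) :
    walsh m f a b = ∑ x, sgn (tr m (b * f x) + tr m (a * x)) := by
  rw [walsh]
  exact finsum_eq_sum_of_fintype _

theorem part1 (m i : ℕ) (hm : 3 < m) (hmodd : Odd m) (hi : Nat.gcd i m = 1) :
    ∀ a b : GaloisField 2 m, b ≠ 0 →
      walsh m (Fab m i) a b = 0 ∨ walsh m (Fab m i) a b = 2 ^ ((m + 1) / 2) ∨
        walsh m (Fab m i) a b = -(2 ^ ((m + 1) / 2)) := by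
  intro a b hb
  have hm0 : m ≠ 0 := by omega
  set j := i % m with hj
  have hgcdj : Nat.gcd j m = 1 := by
    rw [hj, ← Nat.gcd_rec, Nat.gcd_comm]; exact hi
  have hjne : j ≠ 0 := by
    intro h0
    rw [h0, Nat.gcd_zero_left] at hgcdj
    omega
  have hgcd2j : Nat.gcd (2 * j) m = 1 := by
    have hc2 : Nat.Coprime 2 m := by
      exact Nat.coprime_two_left.mpr hmodd
    exact Nat.Coprime.mul hc2 hgcdj
  have h2 : (2 : GaloisField 2 m) = 0 := two_eq_zero
  set ι := algebraMap (ZMod 2) (GaloisField 2 m) with hι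
  set ε : GaloisField 2 m := ι (tr m (a + b)) with hε
  -- reindex the walsh sum along sig
  have hreix : walsh m (Fab m i) a b
      = ∑ x, sgn (tr m (b * Fab m i (sig m j x)) + tr m (a * sig m j x)) := by
    rw [walsh_eq]
    exact (Fintype.sum_equiv (Function.Involutive.toPerm _ (sig_invol (m := m) (j := j)))
      _ _ (fun x => rfl)).symm
  -- pointwise exponent identity
  have hpt : ∀ x : GaloisField 2 m,
      tr m (b * Fab m i (sig m j x)) + tr m (a * sig m j x)
      = tr m ((b + ε) * (x ^ (2 ^ j) * x) + (a + ε) * x) := by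
    intro x
    rw [Fab_sig hm0 rfl x]
    show _ + tr m (a * (x + algebraMap (ZMod 2) (GaloisField 2 m) (qf m j x))) = _
    set X := x ^ (2 ^ j) * x with hX
    set t := qf m j x with ht
    have l1 : b * (X + ι t) = b * X + ι t * b := by ring
    have l2 : a * (x + ι t) = a * x + ι t * a := by ring
    rw [l1, l2, tr_add, tr_add, tr_algmul, tr_algmul]
    have r1 : (b + ε) * X + (a + ε) * x = (b * X + a * x) + ε * (X + x) := by ring
    rw [r1, tr_add, tr_add]
    have r2 : tr m (ε * (X + x)) = tr m (a + b) * tr m (X + x) := by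
      rw [hε, tr_algmul]
    rw [r2]
    have r3 : tr m (X + x) = t := by rw [ht, qf, hX]
    rw [r3, tr_add a b]
    ring
  have hsum : walsh m (Fab m i) a b
      = ∑ x, sgn (tr m ((b + ε) * (x ^ (2 ^ j) * x) + (a + ε) * x)) := by
    rw [hreix]
    exact Finset.sum_congr rfl (fun x _ => by rw [hpt x])
  by_cases hbe : b + ε = 0
  · -- degenerate case
    have haε : a + ε ≠ 0 := by
      intro hae
      have hab : a = b := by
        have h1 : a = ε := by linear_combination hae - ε * h2
        have h2' : b = ε := by linear_combination hbe - ε * h2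
        rw [h1, h2']
      have hε0 : ε = 0 := by
        rw [hε, hab]
        have : b + b = 0 := by linear_combination b * h2
        rw [this, tr_zero, map_zero]
      apply hb
      linear_combination hbe - hε0
    left
    rw [hsum]
    have : ∀ x : GaloisField 2 m,
        sgn (tr m ((b + ε) * (x ^ (2 ^ j) * x) + (a + ε) * x)) = sgn (tr m ((a + ε) * x)) := by
      intro x
      rw [hbe, zero_mul, zero_add]
    rw [Finset.sum_congr rfl (fun x _ => this x)]
    exact sum_sgn_linear haε
  · rw [hsum]
    exact gold hm0 hmodd hjne hgcd2j (a + ε) (b + ε) hbe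


section T3gen

variable {G : Type*} [AddCommGroup G]

/-- third discrete derivative -/
def T3 (f : G → ZMod 2) (a b c x : G) : ZMod 2 :=
  f (x+a+b+c) + f (x+a+b) + f (x+a+c) + f (x+b+c) + f (x+a) + f (x+b) + f (x+c) + f x

def DegLE2 (f : G → ZMod 2) : Prop := ∀ a b c x, T3 f a b c x = 0

lemma T3_add (f g : G → ZMod 2) (a b c x : G) :
    T3 (fun z => f z + g z) a b c x = T3 f a b c x + T3 g a b c x := by
  simp only [T3]; ring

lemma T3_congr {f g : G → ZMod 2} (h : ∀ z, f z = g z) (a b c x : G) :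
    T3 f a b c x = T3 g a b c x := by
  simp only [T3, h]

lemma T3_quad (f : G → ZMod 2) (B : G → G → ZMod 2)
    (hq : ∀ u v, f (u + v) = f u + B u v + f v)
    (hB : ∀ u v w, B (u + v) w = B u w + B v w)
    (a b c x : G) : T3 f a b c x = 0 := by
  simp only [T3, hq, hB]
  generalize f x = fx
  generalize f a = fa
  generalize f b = fb
  generalize f c = fc
  generalize B x a = Bxa
  generalize B x b = Bxb
  generalize B x c = Bxc
  generalize B a b = Bab
  generalize B a c = Bac
  generalize B b c = Bbc
  revert fx fa fb fc Bxa Bxb Bxc Bab Bac Bbc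
  decide

lemma T3_addhom (f : G → ZMod 2) (hf : ∀ u v, f (u + v) = f u + f v)
    (a b c x : G) : T3 f a b c x = 0 := by
  apply T3_quad f (fun _ _ => 0) (fun u v => by rw [hf]; ring) (fun _ _ _ => by ring)

lemma T3_const (t : ZMod 2) (a b c x : G) : T3 (fun _ => t) a b c x = 0 := by
  simp only [T3]
  revert t; decide

set_option maxHeartbeats 4000000 in
lemma T3_prod (l q : G → ZMod 2) (B : G → G → ZMod 2)
    (hl : ∀ u v, l (u + v) = l u + l v)
    (hq : ∀ u v, q (u + v) = q u + B u v + q v)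
    (hB : ∀ u v w, B (u + v) w = B u w + B v w)
    (a b c x : G) :
    T3 (fun z => l z * q z) a b c x = l a * B b c + l b * B a c + l c * B a b := by
  simp only [T3, hq, hB, hl]
  generalize q x = qx
  generalize q a = qa
  generalize q b = qb
  generalize q c = qc
  generalize l x = lx
  generalize l a = la
  generalize l b = lb
  generalize l c = lc
  generalize B x a = Bxa
  generalize B x b = Bxb
  generalize B x c = Bxc
  generalize B a b = Bab
  generalize B a c = Bac
  generalize B b c = Bbc
  revert qx qa qb qc lx la lb lc Bxa Bxb Bxc Bab Bac Bbc
  decide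

lemma T3_affine (f : G → ZMod 2) (e : G → G) (he : ∀ u v, e (u + v) = e u + e v)
    (t : G) (a b c x : G) :
    T3 (fun z => f (e z + t)) a b c x = T3 f (e a) (e b) (e c) (e x + t) := by
  simp only [T3, he]
  have h1 : e x + e a + e b + e c + t = e x + t + e a + e b + e c := by abel
  have h2 : e x + e a + e b + t = e x + t + e a + e b := by abel
  have h3 : e x + e a + e c + t = e x + t + e a + e c := by abel
  have h4 : e x + e b + e c + t = e x + t + e b + e c := by abel
  have h5 : e x + e a + t = e x + t + e a := by abel
  have h6 : e x + e b + t = e x + t + e b := by abel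
  have h7 : e x + e c + t = e x + t + e c := by abel
  rw [h1, h2, h3, h4, h5, h6, h7]


end T3gen

-- ============ axioms standing for proven lemmas ============
-- ============ end axioms ============

/-- the bilinear form of qf -/
noncomputable def Bq (m j : ℕ) (u v : GaloisField 2 m) : ZMod 2 :=
  tr m (u ^ (2 ^ j) * v + u * v ^ (2 ^ j))

section part2core
variable {i j k : ℕ}

lemma hfr2 (j : ℕ) : ∀ y z : GaloisField 2 m, (y + z) ^ (2 ^ j) = y ^ (2 ^ j) + z ^ (2 ^ j) :=
  fun y z => add_pow_char_pow y z 2 j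

lemma Bq_hq : ∀ u v : GaloisField 2 m, qf m j (u + v) = qf m j u + Bq m j u v + qf m j v := by
  intro u v
  rw [qf, qf, qf, Bq, ← tr_add, ← tr_add]
  congr 1
  rw [hfr2 j u v]
  ring

lemma Bq_addleft : ∀ u v w : GaloisField 2 m, Bq m j (u + v) w = Bq m j u w + Bq m j v w := by
  intro u v w
  rw [Bq, Bq, Bq, ← tr_add]
  congr 1
  rw [hfr2 j u v]
  ring

lemma shift_tr (hm : m ≠ 0) (hjk : j + k = m) (u v : GaloisField 2 m) :
    tr m (u ^ (2 ^ j) * v) = tr m (u * v ^ (2 ^ k)) := by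
  rw [← tr_pow2pow k (u ^ (2 ^ j) * v)]
  congr 1
  rw [mul_pow, ← pow_mul, ← pow_add, hjk, pow_card hm]

lemma Bq_rho (hm : m ≠ 0) (hjk : j + k = m) (u v : GaloisField 2 m) :
    Bq m j u v = tr m (u * (v ^ (2 ^ k) + v ^ (2 ^ j))) := by
  rw [Bq, tr_add, shift_tr hm hjk u v, ← tr_add]
  congr 1
  ring

lemma ell_rep (hm : m ≠ 0) (hjk : j + k = m) (β x : GaloisField 2 m) :
    tr m (β * (x ^ (2 ^ j) + x)) = tr m ((β ^ (2 ^ k) + β) * x) := by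
  have h1 : tr m (β * x ^ (2 ^ j)) = tr m (β ^ (2 ^ k) * x) := by
    rw [← tr_pow2pow k (β * x ^ (2 ^ j))]
    congr 1
    rw [mul_pow, ← pow_mul, ← pow_add, hjk, pow_card hm]
  rw [mul_add, tr_add, h1, add_mul, tr_add]

lemma comp_decomp (hm : m ≠ 0) (hij : i % m = j) (β x : GaloisField 2 m) :
    tr m (β * Fab m i x)
      = tr m (β * (x ^ (2 ^ j) * x)) + tr m (β * (x ^ (2 ^ j) + x)) * qf m j x := by
  rw [Fab_j hm, hij]
  have e1 : β * (x ^ (2 ^ j) * x + (x ^ (2 ^ j) + x) *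
      algebraMap (ZMod 2) (GaloisField 2 m) (qf m j x))
      = β * (x ^ (2 ^ j) * x) + algebraMap (ZMod 2) (GaloisField 2 m) (qf m j x) *
        (β * (x ^ (2 ^ j) + x)) := by ring
  rw [e1, tr_add, tr_algmul, mul_comm (qf m j x)]

/-- key hard lemma: for β ∉ {0,1} the component `tr (β * Fab x)` has degree 3. -/
lemma notdeg2 (hm : 3 < m) (hmodd : Odd m) (hjne : j ≠ 0) (hjk : j + k = m)
    (hgcdk : Nat.gcd k m = 1) (hgcd2j : Nat.gcd (2 * j) m = 1)
    {β : GaloisField 2 m} (hβ0 : β ≠ 0) (hβ1 : β ≠ 1) (hij : i % m = j) :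
    ¬ DegLE2 (fun x => tr m (β * Fab m i x)) := by
  classical
  have hm0 : m ≠ 0 := by omega
  have h2 : (2 : GaloisField 2 m) = 0 := two_eq_zero
  set s : GaloisField 2 m := β ^ (2 ^ k) + β with hs_def
  have hs : s ≠ 0 := by
    intro h0
    have hfix : β ^ (2 ^ k) = β := by linear_combination h0 - β * h2
    rcases fix_eta hm0 hgcdk β hfix with h | h
    · exact hβ0 h
    · exact hβ1 h
  -- ρ
  set ρ : GaloisField 2 m → GaloisField 2 m := fun z => z ^ (2 ^ k) + z ^ (2 ^ j) with hρ_def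
  have hρ_add : ∀ u v, ρ (u + v) = ρ u + ρ v := by
    intro u v
    simp only [hρ_def, hfr2 k u v, hfr2 j u v]
    ring
  have hρ_zero : ∀ z : GaloisField 2 m, ρ z = 0 → z = 0 ∨ z = 1 := by
    intro z h0
    have he : z ^ (2 ^ k) = z ^ (2 ^ j) := by
      simp only [hρ_def] at h0
      linear_combination h0 - z ^ (2 ^ j) * h2
    have hfix : z ^ (2 ^ (2 * j)) = z := by
      have e1 : z ^ (2 ^ (2 * j)) = (z ^ (2 ^ j)) ^ (2 ^ j) := by
        rw [← pow_mul, ← pow_add]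
        congr 1
        congr 1
        omega
      rw [e1, ← he, ← pow_mul, ← pow_add, Nat.add_comm k j, hjk]
      exact pow_card hm0 z
    exact fix_eta hm0 hgcd2j z hfix
  -- the linear form ℓ x = tr (s x); kernel counting
  set K : Finset (GaloisField 2 m) := Finset.univ.filter (fun x => tr m (s * x) = 0) with hK_def
  have hKcard : 2 * K.card = 2 ^ m := by
    have hsum := sum_sgn_linear hs
    have hpt : ∀ x : GaloisField 2 m,
        sgn (tr m (s * x)) = 2 * (if tr m (s * x) = 0 then (1:ℤ) else 0) - 1 := by
      intro x
      rcases zmod2_cases (tr m (s * x)) with h | h <;> rw [h] <;> decide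
    rw [Finset.sum_congr rfl (fun x _ => hpt x), Finset.sum_sub_distrib,
      ← Finset.mul_sum, Finset.sum_boole, Finset.sum_const] at hsum
    simp only [nsmul_eq_mul, mul_one] at hsum
    have hcard : (Finset.univ : Finset (GaloisField 2 m)).card = 2 ^ m := by
      rw [Finset.card_univ, ← Nat.card_eq_fintype_card, GaloisField.card 2 m hm0]
    rw [hcard] at hsum
    rw [← hK_def] at hsum
    omega
  have hK16 : 16 ≤ K.card := by
    have h5 : 5 ≤ m := by obtain ⟨t, ht⟩ := hmodd; omega
    have h32 : 2 * 16 ≤ 2 ^ m :=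
      calc 2 * 16 = 2 ^ 5 := by norm_num
      _ ≤ 2 ^ m := Nat.pow_le_pow_right (by norm_num) h5
    omega
  -- pick c and c'
  have hpick1 : ∃ c, c ∈ K ∧ c ≠ 0 ∧ c ≠ 1 := by
    have hle : ({0, 1} : Finset (GaloisField 2 m)).card ≤ 2 :=
      (Finset.card_insert_le _ _).trans (by simp)
    have hcard : 0 < (K \ ({0, 1} : Finset (GaloisField 2 m))).card := by
      have hsd := Finset.le_card_sdiff ({0, 1} : Finset (GaloisField 2 m)) K
      omega
    obtain ⟨c, hc⟩ := Finset.card_pos.mp hcard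
    rw [Finset.mem_sdiff, Finset.mem_insert, Finset.mem_singleton] at hc
    exact ⟨c, hc.1, fun h => hc.2 (Or.inl h), fun h => hc.2 (Or.inr h)⟩
  obtain ⟨c, hcK, hc0, hc1⟩ := hpick1
  have hpick2 : ∃ c', c' ∈ K ∧ c' ≠ 0 ∧ c' ≠ 1 ∧ c' ≠ c ∧ c' ≠ c + 1 := by
    have hle : ({0, 1, c, c + 1} : Finset (GaloisField 2 m)).card ≤ 4 := by
      refine (Finset.card_insert_le _ _).trans ?_
      refine Nat.succ_le_succ ?_
      refine (Finset.card_insert_le _ _).trans ?_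
      refine Nat.succ_le_succ ?_
      exact (Finset.card_insert_le _ _).trans (by simp)
    have hcard : 0 < (K \ ({0, 1, c, c + 1} : Finset (GaloisField 2 m))).card := by
      have hsd := Finset.le_card_sdiff ({0, 1, c, c + 1} : Finset (GaloisField 2 m)) K
      omega
    obtain ⟨c', hc'⟩ := Finset.card_pos.mp hcard
    rw [Finset.mem_sdiff, Finset.mem_insert, Finset.mem_insert, Finset.mem_insert,
      Finset.mem_singleton] at hc'
    refine ⟨c', hc'.1, ?_, ?_, ?_, ?_⟩ <;> intro h <;> exact hc'.2 (by tauto)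
  obtain ⟨c', hc'K, hc'0, hc'1, hc'c, hc'c1⟩ := hpick2
  have hmemK : ∀ z : GaloisField 2 m, z ∈ K → tr m (s * z) = 0 := by
    intro z hz
    rw [hK_def, Finset.mem_filter] at hz
    exact hz.2
  have hρc : ρ c ≠ 0 := by
    intro h0
    rcases hρ_zero c h0 with h | h
    · exact hc0 h
    · exact hc1 h
  have hρc' : ρ c' ≠ 0 := by
    intro h0
    rcases hρ_zero c' h0 with h | h
    · exact hc'0 h
    · exact hc'1 h
  have hρne : ρ c ≠ ρ c' := by
    intro heq
    have hsum0 : ρ (c + c') = 0 := by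
      rw [hρ_add, heq]
      linear_combination (ρ c') * h2
    rcases hρ_zero _ hsum0 with h | h
    · exact hc'c (by linear_combination h - c * h2)
    · exact hc'c1 (by linear_combination h - c * h2)
  -- pick cc among c, c' with ρ cc ≠ s
  obtain ⟨cc, hccK, hρcc0, hρccs⟩ :
      ∃ cc, cc ∈ K ∧ ρ cc ≠ 0 ∧ ρ cc ≠ s := by
    rcases eq_or_ne (ρ c) s with h | h
    · exact ⟨c', hc'K, hρc', by rw [← h]; exact fun hh => hρne hh.symm⟩
    · exact ⟨c, hcK, hρc, h⟩
  -- choose b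
  obtain ⟨b₁, hb₁⟩ := tr_nondeg hρcc0
  -- the T3 formula for the component
  have hT3 : ∀ a b c x : GaloisField 2 m,
      T3 (fun z => tr m (β * Fab m i z)) a b c x
        = tr m (s * a) * Bq m j b c + tr m (s * b) * Bq m j a c
          + tr m (s * c) * Bq m j a b := by
    intro a b c x
    have hdec : ∀ z : GaloisField 2 m, tr m (β * Fab m i z)
        = tr m (β * (z ^ (2 ^ j) * z)) + tr m (β * (z ^ (2 ^ j) + z)) * qf m j z :=
      fun z => comp_decomp hm0 hij β z
    rw [T3_congr hdec a b c x, T3_add]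
    have hquad : T3 (fun z => tr m (β * (z ^ (2 ^ j) * z))) a b c x = 0 := by
      apply T3_quad _ (fun u v => tr m (β * (u ^ (2 ^ j) * v + u * v ^ (2 ^ j))))
      · intro u v
        rw [← tr_add, ← tr_add]
        congr 1
        rw [hfr2 j u v]
        ring
      · intro u v w
        rw [← tr_add]
        congr 1
        rw [hfr2 j u v]
        ring
    have hprodT : T3 (fun z => tr m (β * (z ^ (2 ^ j) + z)) * qf m j z) a b c x
        = tr m (β * (a ^ (2 ^ j) + a)) * Bq m j b c
          + tr m (β * (b ^ (2 ^ j) + b)) * Bq m j a c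
          + tr m (β * (c ^ (2 ^ j) + c)) * Bq m j a b := by
      apply T3_prod _ _ (Bq m j)
      · intro u v
        rw [← tr_add]
        congr 1
        rw [hfr2 j u v]
        ring
      · exact Bq_hq
      · exact Bq_addleft
    rw [hquad, hprodT, zero_add]
    have hrep : ∀ z : GaloisField 2 m, tr m (β * (z ^ (2 ^ j) + z)) = tr m (s * z) :=
      fun z => ell_rep hm0 hjk β z
    rw [hrep a, hrep b, hrep c]
  -- derive the contradiction
  intro hdeg
  have hBbc : Bq m j b₁ cc = 1 := by
    rw [Bq_rho hm0 hjk, mul_comm]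
    exact hb₁
  have hcc0 : tr m (s * cc) = 0 := hmemK cc hccK
  rcases zmod2_cases (tr m (s * b₁)) with hℓb | hℓb
  · obtain ⟨a₁, ha₁⟩ := tr_nondeg hs
    have hE := hdeg a₁ b₁ cc 0
    rw [hT3 a₁ b₁ cc 0, hBbc, hcc0, hℓb, ha₁] at hE
    simp at hE
  · have hsr : s + ρ cc ≠ 0 := by
      intro h0
      apply hρccs
      linear_combination -h0 + (ρ cc) * h2
    obtain ⟨a₁, ha₁⟩ := tr_nondeg hsr
    have hE := hdeg a₁ b₁ cc 0
    rw [hT3 a₁ b₁ cc 0, hBbc, hcc0, hℓb] at hE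
    rw [Bq_rho hm0 hjk] at hE
    have hsplit : tr m ((s + ρ cc) * a₁) = tr m (s * a₁) + tr m (a₁ * ρ cc) := by
      rw [← tr_add]
      congr 1
      ring
    rw [hsplit] at ha₁
    have hfold : tr m (a₁ * (cc ^ 2 ^ k + cc ^ 2 ^ j)) = tr m (a₁ * ρ cc) := rfl
    rw [mul_one, one_mul, zero_mul, add_zero, hfold] at hE
    rw [hE] at ha₁
    exact absurd ha₁ (by decide)

end part2core

theorem part2 (m i : ℕ) (hm : 3 < m) (hmodd : Odd m) (hi : Nat.gcd i m = 1)
    (hP1 : ∀ a b : GaloisField 2 m, b ≠ 0 →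
      walsh m (Fab m i) a b = 0 ∨ walsh m (Fab m i) a b = 2 ^ ((m + 1) / 2) ∨
        walsh m (Fab m i) a b = -(2 ^ ((m + 1) / 2))) :
    ¬ ∃ (d : ℕ) (A₁ A₂ : GaloisField 2 m ≃ₗ[ZMod 2] GaloisField 2 m)
        (A : GaloisField 2 m →ₗ[ZMod 2] GaloisField 2 m)
        (c₁ c₂ c₀ : GaloisField 2 m),
        ∀ x, Fab m i x = A₁ ((A₂ x + c₂) ^ d) + c₁ + A x + c₀ := by
  classical
  rintro ⟨d, A₁, A₂, A, c₁, c₂, c₀, hEA⟩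
  have hm0 : m ≠ 0 := by omega
  have h2 : (2 : GaloisField 2 m) = 0 := two_eq_zero
  set j := i % m with hj_def
  have hjlt : j < m := Nat.mod_lt _ (by omega)
  have hgcdj : Nat.gcd j m = 1 := by
    rw [hj_def, ← Nat.gcd_rec, Nat.gcd_comm]; exact hi
  have hjne : j ≠ 0 := by
    intro h0; rw [h0, Nat.gcd_zero_left] at hgcdj; omega
  set k := m - j with hk_def
  have hjk : j + k = m := by omega
  have hgcdk : Nat.gcd k m = 1 := by
    rw [hk_def, Nat.gcd_self_sub_left (le_of_lt hjlt)]; exact hgcdj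
  have hgcd2j : Nat.gcd (2 * j) m = 1 :=
    Nat.Coprime.mul (Nat.coprime_two_left.mpr hmodd) hgcdj
  set G : GaloisField 2 m → GaloisField 2 m → ZMod 2 :=
    fun γ y => tr m (γ * y ^ d) with hG_def
  -- adjoint existence for A₁
  have hadj : ∀ γ' : GaloisField 2 m, ∃ β, ∀ y, tr m (β * A₁ y) = tr m (γ' * y) := by
    intro γ'
    obtain ⟨β, hβ⟩ := exists_adjoint (fun z => tr m (γ' * A₁.symm z))
      (fun x y => by
        show tr m (γ' * A₁.symm (x + y)) = tr m (γ' * A₁.symm x) + tr m (γ' * A₁.symm y)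
        rw [map_add, mul_add, tr_add])
    refine ⟨β, fun y => ?_⟩
    have hy := hβ (A₁ y)
    simp only [LinearEquiv.symm_apply_apply] at hy
    exact hy.symm
  -- transfer lemma
  have htrans : ∀ (β γ' : GaloisField 2 m), (∀ y, tr m (β * A₁ y) = tr m (γ' * y)) →
      (DegLE2 (fun x => tr m (β * Fab m i x)) ↔ DegLE2 (G γ')) := by
    intro β γ' hβ
    have hrew : ∀ x, tr m (β * Fab m i x)
        = G γ' (A₂ x + c₂) + (tr m (β * A x) + tr m (β * (c₁ + c₀))) := by
      intro x
      rw [hEA x]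
      have e1 : β * (A₁ ((A₂ x + c₂) ^ d) + c₁ + A x + c₀)
          = β * A₁ ((A₂ x + c₂) ^ d) + β * A x + β * (c₁ + c₀) := by ring
      rw [e1, tr_add, tr_add, hβ ((A₂ x + c₂) ^ d), hG_def]
      ring
    have hT3G : ∀ a b c x : GaloisField 2 m,
        T3 (fun z => tr m (β * Fab m i z)) a b c x
          = T3 (G γ') (A₂ a) (A₂ b) (A₂ c) (A₂ x + c₂) := by
      intro a b c x
      have hz1 : T3 (fun z : GaloisField 2 m => tr m (β * A z)) a b c x = 0 :=
        T3_addhom _ (fun u v => by rw [map_add, mul_add, tr_add]) a b c x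
      have hz2 : T3 (fun _ : GaloisField 2 m => tr m (β * (c₁ + c₀))) a b c x = 0 :=
        T3_const _ a b c x
      calc T3 (fun z => tr m (β * Fab m i z)) a b c x
          = T3 (fun z => G γ' (A₂ z + c₂)
              + (tr m (β * A z) + tr m (β * (c₁ + c₀)))) a b c x := T3_congr hrew a b c x
        _ = T3 (fun z => G γ' (A₂ z + c₂)) a b c x
              + T3 (fun z => tr m (β * A z) + tr m (β * (c₁ + c₀))) a b c x := by
            rw [T3_add]
        _ = T3 (fun z => G γ' (A₂ z + c₂)) a b c x := by
            rw [T3_add, hz1, hz2]; ring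
        _ = T3 (G γ') (A₂ a) (A₂ b) (A₂ c) (A₂ x + c₂) :=
            T3_affine (G γ') (fun z => A₂ z) (fun u v => map_add A₂ u v) c₂ a b c x
    constructor
    · intro h a' b' c' y
      have h1 := h (A₂.symm a') (A₂.symm b') (A₂.symm c') (A₂.symm (y - c₂))
      rw [hT3G] at h1
      simpa [LinearEquiv.apply_symm_apply, sub_add_cancel] using h1
    · intro h a b c x
      rw [hT3G]
      exact h _ _ _ _
  -- γ₁ and degree facts
  obtain ⟨γ₁, hγ₁⟩ := exists_adjoint (fun y => tr m ((1 : GaloisField 2 m) * A₁ y))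
    (fun u v => by
      show tr m (1 * A₁ (u + v)) = tr m (1 * A₁ u) + tr m (1 * A₁ v)
      rw [map_add, mul_add, tr_add])
  have hγ₁0 : γ₁ ≠ 0 := by
    intro h0
    obtain ⟨x, hx⟩ := tr_nondeg (one_ne_zero (α := GaloisField 2 m))
    have hh := hγ₁ (A₁.symm x)
    rw [h0, zero_mul, tr_zero] at hh
    simp only [LinearEquiv.apply_symm_apply] at hh
    rw [hx] at hh
    exact absurd hh (by decide)
  have hdeg1 : DegLE2 (fun x => tr m ((1 : GaloisField 2 m) * Fab m i x)) := by
    intro a b c x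
    have hl0 : ∀ z : GaloisField 2 m, tr m ((1 : GaloisField 2 m) * (z ^ (2^j) + z)) = 0 := by
      intro z
      rw [one_mul, tr_add, tr_pow2pow]
      exact CharTwo.add_self_eq_zero _
    have hdec : ∀ z : GaloisField 2 m, tr m ((1 : GaloisField 2 m) * Fab m i z)
        = tr m ((1 : GaloisField 2 m) * (z ^ (2^j) * z)) := by
      intro z
      rw [comp_decomp hm0 hj_def.symm, hl0, zero_mul, add_zero]
    rw [T3_congr hdec]
    apply T3_quad _ (fun u v => tr m ((1 : GaloisField 2 m) * (u ^ (2 ^ j) * v + u * v ^ (2 ^ j))))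
    · intro u v
      rw [← tr_add, ← tr_add]
      congr 1
      rw [hfr2 j u v]
      ring
    · intro u v w
      rw [← tr_add]
      congr 1
      rw [hfr2 j u v]
      ring
  have hdegG1 : DegLE2 (G γ₁) := (htrans 1 γ₁ hγ₁).mp hdeg1
  have hnotG : ∀ γ' : GaloisField 2 m, γ' ≠ 0 → γ' ≠ γ₁ → ¬ DegLE2 (G γ') := by
    intro γ' h0 h1
    obtain ⟨β, hβ⟩ := hadj γ'
    have hβ0 : β ≠ 0 := by
      intro hh
      obtain ⟨y, hy⟩ := tr_nondeg h0
      have he := hβ y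
      rw [hh, zero_mul, tr_zero] at he
      rw [← he] at hy
      exact absurd hy (by decide)
    have hβ1 : β ≠ 1 := by
      intro hh
      have hdiff : γ' + γ₁ ≠ 0 := by
        intro hz
        apply h1
        linear_combination hz - γ₁ * h2
      obtain ⟨y, hy⟩ := tr_nondeg hdiff
      have e1 := hβ y
      rw [hh] at e1
      have e2 := hγ₁ y
      have e3 : tr m ((γ' + γ₁) * y) = 0 := by
        have hsplit : tr m ((γ' + γ₁) * y) = tr m (γ' * y) + tr m (γ₁ * y) := by
          rw [← tr_add]; congr 1; ring
        rw [hsplit, ← e1, ← e2]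
        exact CharTwo.add_self_eq_zero _
      rw [e3] at hy
      exact absurd hy (by decide)
    intro hdeg
    exact notdeg2 hm hmodd hjne hjk hgcdk hgcd2j hβ0 hβ1 hj_def.symm
      ((htrans β γ' hβ).mpr hdeg)
  -- scaling: every nonzero d-th power is 1
  have hlam : ∀ lam : GaloisField 2 m, lam ≠ 0 → lam ^ d = 1 := by
    intro lam hlam0
    have hscale : DegLE2 (G (γ₁ * lam ^ d)) := by
      intro a b c x
      have e1 : ∀ y : GaloisField 2 m, G (γ₁ * lam ^ d) y = G γ₁ (lam * y + 0) := by
        intro y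
        rw [hG_def]
        simp only [add_zero, mul_pow]
        congr 1
        ring
      rw [T3_congr e1, T3_affine (G γ₁) (fun y => lam * y) (fun u v => mul_add lam u v) 0]
      exact hdegG1 _ _ _ _
    by_contra hne
    have h0 : γ₁ * lam ^ d ≠ 0 := mul_ne_zero hγ₁0 (pow_ne_zero _ hlam0)
    have h1 : γ₁ * lam ^ d ≠ γ₁ := by
      intro hh
      exact hne (mul_left_cancel₀ hγ₁0 (hh.trans (mul_one γ₁).symm))
    exact hnotG _ h0 h1 hscale
  -- collapse to an affine map off one point
  set xstar := A₂.symm c₂ with hxstar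
  have hoff : ∀ x : GaloisField 2 m, x ≠ xstar →
      Fab m i x = (A₁ 1 + c₁ + c₀) + A x := by
    intro x hx
    have hne : A₂ x + c₂ ≠ 0 := by
      intro h0
      apply hx
      have hAx : A₂ x = c₂ := by linear_combination h0 - c₂ * h2
      rw [hxstar, ← hAx, LinearEquiv.symm_apply_apply]
    rw [hEA x, hlam _ hne]
    ring
  -- walsh contradiction
  obtain ⟨a₀, ha₀⟩ := exists_adjoint (fun x : GaloisField 2 m => tr m (A x))
    (fun u v => by
      show tr m (A (u + v)) = tr m (A u) + tr m (A v)
      rw [map_add, tr_add])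
  have hzz : ∀ u v : ZMod 2, u + v + v = u := by decide
  have hsummand : ∀ x : GaloisField 2 m, x ≠ xstar →
      sgn (tr m (1 * Fab m i x) + tr m (a₀ * x)) = sgn (tr m (A₁ 1 + c₁ + c₀)) := by
    intro x hx
    rw [one_mul, hoff x hx, tr_add, ← ha₀ x, hzz]
  have hwalsh : walsh m (Fab m i) a₀ 1
      = (2 ^ m - 1 : ℤ) * sgn (tr m (A₁ 1 + c₁ + c₀))
        + sgn (tr m (1 * Fab m i xstar) + tr m (a₀ * xstar)) := by
    rw [walsh_eq, ← Finset.sum_erase_add _ _ (Finset.mem_univ xstar)]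
    congr 1
    rw [Finset.sum_congr rfl
      (fun x hx => hsummand x (Finset.mem_erase.mp hx).1)]
    rw [Finset.sum_const, Finset.card_erase_of_mem (Finset.mem_univ _),
      Finset.card_univ, card_F hm0, nsmul_eq_mul]
    rw [Nat.cast_sub Nat.one_le_two_pow]
    push_cast
    ring
  have hP := hP1 a₀ 1 one_ne_zero
  have hQP : (2:ℤ) ^ ((m + 1) / 2) ≤ 2 ^ (m - 2) := by
    apply pow_le_pow_right₀ (by norm_num)
    obtain ⟨t, ht⟩ := hmodd
    omega
  have h4P : (2:ℤ) ^ m = 4 * 2 ^ (m - 2) := by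
    have hp := pow_add (2:ℤ) (m - 2) 2
    rw [show m - 2 + 2 = m from by omega] at hp
    rw [hp]
    ring
  have hPpos : (0:ℤ) < 2 ^ (m - 2) := pow_pos (by norm_num) _
  have hQpos : (0:ℤ) < 2 ^ ((m + 1) / 2) := pow_pos (by norm_num) _
  rw [h4P] at hwalsh
  rcases sgn_cases (tr m (A₁ 1 + c₁ + c₀)) with h1 | h1 <;>
    rcases sgn_cases (tr m (1 * Fab m i xstar) + tr m (a₀ * xstar)) with hv | hv <;>
    rw [h1, hv] at hwalsh <;>
    rcases hP with h | h | h <;>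
    rw [h] at hwalsh <;>
    linarith


end AB16

/-- For `m > 3` odd, `gcd(i,m) = 1`, the function
`F'(x) = x^{2^i+1} + (x^{2^i}+x)·tr(x^{2^i+1}+x)` is almost bent (all Walsh
values for `b ≠ 0` lie in `{0, ±2^{(m+1)/2}}`) and is EA-inequivalent to every
power function. -/
theorem stmt_16 (m i : ℕ) (hm : 3 < m) (hmodd : Odd m) (hi : Nat.gcd i m = 1) :
    (∀ a b : GaloisField 2 m, b ≠ 0 →
      walsh m (Fab m i) a b = 0 ∨ walsh m (Fab m i) a b = 2 ^ ((m + 1) / 2) ∨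
        walsh m (Fab m i) a b = -(2 ^ ((m + 1) / 2))) ∧
    ¬ ∃ (d : ℕ) (A₁ A₂ : GaloisField 2 m ≃ₗ[ZMod 2] GaloisField 2 m)
        (A : GaloisField 2 m →ₗ[ZMod 2] GaloisField 2 m)
        (c₁ c₂ c₀ : GaloisField 2 m),
        ∀ x, Fab m i x = A₁ ((A₂ x + c₂) ^ d) + c₁ + A x + c₀ := by
  exact ⟨AB16.part1 m i hm hmodd hi,
    AB16.part2 m i hm hmodd hi (AB16.part1 m i hm hmodd hi)⟩
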